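/- Let M be a real symmetric matrix with spectral projections E_λ, and suppose u, v are strongly cospectral indices (E_λ e_u = ± E_λ e_v for each eigenvalue λ), with σ_u⁺(M) = {λ₁,...,λ_r} and σ_u⁻(M) = {θ}. Then perfect state transfer from u to v occurs at time τ if and only if for each j = 1,...,r there is an odd integer m_j with τ(λ_j - θ) = m_j π. -/

import Mathlib

open Matrix Complex

/-- The continuous-time quantum walk transition matrix `U(t) = exp(i t M)`. -/
noncomputable def transU {n : ℕ} (M : Matrix (Fin n) (Fin n) ℝ) (t : ℝ) :
    Matrix (Fin n) (Fin n) ℂ :=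
  NormedSpace.exp ((Complex.I * (t : ℂ)) • M.map (fun x => (x : ℂ)))


/-- `S, E` constitute the spectral decomposition of the real symmetric matrix `M`
(viewed as a complex matrix): the `E lam` for `lam ∈ S` are mutually orthogonal
Hermitian projections summing to the identity, and `M = ∑ lam • E lam`. -/
def IsSpectralDecompOf {n : ℕ} (M : Matrix (Fin n) (Fin n) ℝ)
    (S : Finset ℝ) (E : ℝ → Matrix (Fin n) (Fin n) ℂ) : Prop :=
  (∀ lam ∈ S, (E lam).IsHermitian ∧ E lam * E lam = E lam) ∧
  (∀ lam ∈ S, ∀ mu ∈ S, lam ≠ mu → E lam * E mu = 0) ∧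
  (∑ lam ∈ S, E lam) = 1 ∧
  M.map (fun x => (x : ℂ)) = ∑ lam ∈ S, (lam : ℂ) • E lam

lemma exp_mulVec_eigen {n : ℕ} (A : Matrix (Fin n) (Fin n) ℂ) (x : Fin n → ℂ) (c : ℂ)
    (h : A *ᵥ x = c • x) : NormedSpace.exp A *ᵥ x = Complex.exp c • x := by
  letI : NormedRing (Matrix (Fin n) (Fin n) ℂ) := Matrix.linftyOpNormedRing
  letI : NormedAlgebra ℂ (Matrix (Fin n) (Fin n) ℂ) := Matrix.linftyOpNormedAlgebra
  have hpow : ∀ k : ℕ, A ^ k *ᵥ x = c ^ k • x := by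
    intro k; induction k with
    | zero => simp
    | succ k ih =>
      rw [pow_succ, ← Matrix.mulVec_mulVec, h, Matrix.mulVec_smul, ih, smul_smul, pow_succ]
      ring_nf
  have hs : Summable fun k : ℕ => (((Nat.factorial k) : ℂ))⁻¹ • A ^ k :=
    NormedSpace.expSeries_summable' (𝕂 := ℂ) A
  let L0 : Matrix (Fin n) (Fin n) ℂ →ₗ[ℂ] (Fin n → ℂ) :=
    { toFun := fun B => B *ᵥ x
      map_add' := fun B C => Matrix.add_mulVec B C x
      map_smul' := fun a B => Matrix.smul_mulVec a B x }
  have hL := hs.hasSum.mapL L0.toContinuousLinearMap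
  rw [NormedSpace.exp_eq_tsum (𝕂 := ℂ)]
  have h1 : (L0.toContinuousLinearMap) (∑' k : ℕ, (((Nat.factorial k) : ℂ))⁻¹ • A ^ k)
      = ∑' k : ℕ, (((Nat.factorial k) : ℂ))⁻¹ • (A ^ k *ᵥ x) := by
    rw [hs.hasSum.tsum_eq]
    refine hL.tsum_eq.symm.trans ?_
    congr 1; funext k
    rw [_root_.map_smul]
    rfl
  have h2 : (∑' k : ℕ, (((Nat.factorial k) : ℂ))⁻¹ • (A ^ k *ᵥ x))
      = (∑' k : ℕ, (((Nat.factorial k) : ℂ))⁻¹ • c ^ k) • x := by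
    rw [← (NormedSpace.expSeries_summable' (𝕂 := ℂ) c).tsum_smul_const]
    congr 1; funext k; rw [hpow k, smul_smul, smul_eq_mul]
  calc (∑' k : ℕ, (((Nat.factorial k) : ℂ))⁻¹ • A ^ k) *ᵥ x = _ := h1
    _ = _ := h2
    _ = Complex.exp c • x := by rw [Complex.exp_eq_exp_ℂ, NormedSpace.exp_eq_tsum (𝕂 := ℂ)]

lemma sum_mulVec' {n : ℕ} {ι : Type*} (s : Finset ι) (A : ι → Matrix (Fin n) (Fin n) ℂ)
    (x : Fin n → ℂ) : (∑ i ∈ s, A i) *ᵥ x = ∑ i ∈ s, A i *ᵥ x := by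
  ext j
  simp only [Matrix.mulVec, dotProduct, Finset.sum_apply, Matrix.sum_apply,
    Finset.sum_mul]
  rw [Finset.sum_comm]

lemma mulVec_sum' {n : ℕ} {ι : Type*} (s : Finset ι) (A : Matrix (Fin n) (Fin n) ℂ)
    (x : ι → Fin n → ℂ) : A *ᵥ (∑ i ∈ s, x i) = ∑ i ∈ s, A *ᵥ x i := by
  ext j
  simp only [Matrix.mulVec, dotProduct, Finset.sum_apply, Finset.mul_sum]
  rw [Finset.sum_comm]

lemma exp_eq_neg_one_iff' {a : ℝ} :
    Complex.exp ((a : ℂ) * Complex.I) = -1 ↔ ∃ m : ℤ, Odd m ∧ a = m * Real.pi := by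
  constructor
  · intro h
    have h1 : Complex.exp ((a : ℂ) * I - (Real.pi : ℂ) * I) = 1 := by
      rw [Complex.exp_sub, h, Complex.exp_pi_mul_I]
      norm_num
    rw [Complex.exp_eq_one_iff] at h1
    obtain ⟨k, hk⟩ := h1
    refine ⟨2 * k + 1, ⟨k, by ring⟩, ?_⟩
    have h2 : (a : ℂ) * I = (((2 * k + 1 : ℤ) : ℂ) * (Real.pi : ℂ)) * I := by
      push_cast
      linear_combination hk
    have h3 := mul_right_cancel₀ Complex.I_ne_zero h2
    exact_mod_cast h3
  · rintro ⟨m, ⟨k, hk⟩, rfl⟩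
    have : ((((m : ℝ) * Real.pi : ℝ)) : ℂ) * I
        = (k : ℂ) * (2 * (Real.pi : ℂ) * I) + (Real.pi : ℂ) * I := by
      push_cast [hk]; ring
    rw [this, Complex.exp_add, Complex.exp_int_mul_two_pi_mul_I, Complex.exp_pi_mul_I]
    norm_num

theorem stmt13 {n : ℕ} (M : Matrix (Fin n) (Fin n) ℝ) (hM : M.IsSymm)
    (S : Finset ℝ) (E : ℝ → Matrix (Fin n) (Fin n) ℂ)
    (hSE : IsSpectralDecompOf M S E) (u v : Fin n) (huv : u ≠ v)
    (r : ℕ) (hr : 0 < r) (lam : Fin r → ℝ) (hinj : Function.Injective lam)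
    (θ : ℝ) (hθS : θ ∈ S) (hlamS : ∀ j, lam j ∈ S) (hθlam : ∀ j, θ ≠ lam j)
    -- σ_u⁺(M) = {lam 1, ..., lam r}
    (hplus : ∀ j, E (lam j) *ᵥ Pi.single u 1 = E (lam j) *ᵥ Pi.single v 1 ∧
      E (lam j) *ᵥ Pi.single u 1 ≠ 0)
    -- σ_u⁻(M) = {θ}
    (hminus : E θ *ᵥ Pi.single u 1 = -(E θ *ᵥ Pi.single v 1) ∧
      E θ *ᵥ Pi.single u 1 ≠ 0)
    -- all other eigenvalues are outside the supports of `u` and `v`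
    (hrest : ∀ mu ∈ S, mu ∉ Set.range lam → mu ≠ θ →
      E mu *ᵥ Pi.single u 1 = 0 ∧ E mu *ᵥ Pi.single v 1 = 0)
    (τ : ℝ) :
    (∃ γ : ℂ, ‖γ‖ = 1 ∧
        transU M τ *ᵥ Pi.single u 1 = γ • (Pi.single v 1 : Fin n → ℂ)) ↔
      ∀ j, ∃ m : ℤ, Odd m ∧ τ * (lam j - θ) = m * Real.pi := by
  obtain ⟨hproj, horth, hsum, hdecomp⟩ := hSE
  set eu : Fin n → ℂ := Pi.single u 1 with heu
  set ev : Fin n → ℂ := Pi.single v 1 with hev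
  -- cancellation helper
  have hc : ∀ (a b : ℂ) (x : Fin n → ℂ), x ≠ 0 → a • x = b • x → a = b := by
    intro a b x hx h
    have h' : (a - b) • x = 0 := by rw [sub_smul, h, sub_self]
    rcases smul_eq_zero.mp h' with h'' | h''
    · exact sub_eq_zero.mp h''
    · exact absurd h'' hx
  -- eigenvector property
  have heig : ∀ μ ∈ S, ∀ w : Fin n → ℂ,
      ((Complex.I * (τ : ℂ)) • M.map (fun x => (x : ℂ))) *ᵥ (E μ *ᵥ w)
        = (Complex.I * (τ : ℂ) * (μ : ℂ)) • (E μ *ᵥ w) := by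
    intro μ hμ w
    have hME : M.map (fun x => (x : ℂ)) * E μ = (μ : ℂ) • E μ := by
      rw [hdecomp, Finset.sum_mul, Finset.sum_eq_single μ]
      · rw [Matrix.smul_mul, (hproj μ hμ).2]
      · intro b hb hbμ
        rw [Matrix.smul_mul, horth b hb μ hμ hbμ, smul_zero]
      · intro h; exact absurd hμ h
    rw [Matrix.smul_mulVec, Matrix.mulVec_mulVec, hME, Matrix.smul_mulVec, smul_smul]
  have hexp : ∀ μ ∈ S, ∀ w : Fin n → ℂ,
      transU M τ *ᵥ (E μ *ᵥ w)
        = Complex.exp (Complex.I * (τ : ℂ) * (μ : ℂ)) • (E μ *ᵥ w) := by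
    intro μ hμ w
    exact exp_mulVec_eigen _ _ _ (heig μ hμ w)
  -- decomposition of any vector
  have hx : ∀ w : Fin n → ℂ, w = ∑ μ ∈ S, E μ *ᵥ w := by
    intro w
    conv_lhs => rw [← Matrix.one_mulVec w, ← hsum]
    rw [sum_mulVec']
  have hU : ∀ w : Fin n → ℂ, transU M τ *ᵥ w
      = ∑ μ ∈ S, Complex.exp (Complex.I * (τ : ℂ) * (μ : ℂ)) • (E μ *ᵥ w) := by
    intro w
    conv_lhs => rw [hx w]
    rw [mulVec_sum']
    exact Finset.sum_congr rfl fun μ hμ => hexp μ hμ w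
  -- applying a projection to U *ᵥ eu
  have happ : ∀ μ ∈ S, E μ *ᵥ (transU M τ *ᵥ eu)
      = Complex.exp (Complex.I * (τ : ℂ) * (μ : ℂ)) • (E μ *ᵥ eu) := by
    intro μ hμ
    rw [hU eu, mulVec_sum']
    rw [Finset.sum_eq_single μ]
    · rw [Matrix.mulVec_smul, Matrix.mulVec_mulVec, (hproj μ hμ).2]
    · intro b hb hbμ
      rw [Matrix.mulVec_smul, Matrix.mulVec_mulVec, horth μ hμ b hb (Ne.symm hbμ),
        Matrix.zero_mulVec, smul_zero]
    · intro h; exact absurd hμ h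
  constructor
  · rintro ⟨γ, hγ, hPST⟩ j
    have hγ0 : γ ≠ 0 := by
      intro h; rw [h] at hγ; simp at hγ
    have h1 : Complex.exp (Complex.I * (τ : ℂ) * ((lam j : ℝ) : ℂ)) = γ := by
      refine hc _ _ (E (lam j) *ᵥ eu) (hplus j).2 ?_
      rw [← happ (lam j) (hlamS j), hPST, Matrix.mulVec_smul, ← (hplus j).1]
    have h2 : Complex.exp (Complex.I * (τ : ℂ) * ((θ : ℝ) : ℂ)) = -γ := by
      refine hc _ _ (E θ *ᵥ eu) hminus.2 ?_
      rw [← happ θ hθS, hPST, Matrix.mulVec_smul, hminus.1, smul_neg, ← neg_smul, neg_neg]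
    have h3 : Complex.exp (((τ * (lam j - θ) : ℝ) : ℂ) * Complex.I) = -1 := by
      have he : ((τ * (lam j - θ) : ℝ) : ℂ) * Complex.I
          = Complex.I * (τ : ℂ) * ((lam j : ℝ) : ℂ) - Complex.I * (τ : ℂ) * ((θ : ℝ) : ℂ) := by
        push_cast; ring
      rw [he, Complex.exp_sub, h1, h2, div_neg, div_self hγ0]
    exact exp_eq_neg_one_iff'.mp h3
  · intro hcond
    refine ⟨-Complex.exp (Complex.I * (τ : ℂ) * ((θ : ℝ) : ℂ)), ?_, ?_⟩
    · rw [norm_neg, Complex.norm_exp]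
      have : (Complex.I * (τ : ℂ) * ((θ : ℝ) : ℂ)).re = 0 := by simp
      rw [this, Real.exp_zero]
    · rw [hU eu]
      conv_rhs => rw [hx ev]
      rw [Finset.smul_sum]
      refine Finset.sum_congr rfl fun μ hμ => ?_
      by_cases hμθ : μ = θ
      · subst hμθ
        rw [hminus.1, smul_neg, ← neg_smul]
      · by_cases hμlam : μ ∈ Set.range lam
        · obtain ⟨j, rfl⟩ := hμlam
          obtain ⟨m, hmodd, hmeq⟩ := hcond j
          have hneg : Complex.exp (((τ * (lam j - θ) : ℝ) : ℂ) * Complex.I) = -1 :=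
            exp_eq_neg_one_iff'.mpr ⟨m, hmodd, hmeq⟩
          have he : Complex.I * (τ : ℂ) * ((lam j : ℝ) : ℂ)
              = Complex.I * (τ : ℂ) * ((θ : ℝ) : ℂ)
                + ((τ * (lam j - θ) : ℝ) : ℂ) * Complex.I := by
            push_cast; ring
          rw [(hplus j).1, he, Complex.exp_add, hneg]
          ring_nf
        · obtain ⟨hu0, hv0⟩ := hrest μ hμ hμlam hμθ
          rw [hu0, hv0, smul_zero, smul_zero]
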